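/- Let n, k, s be integers with n ≥ 2k+1 and k−s+1 ≥ 0, and let H be a graph of order n with minimum degree at least k such that every pair of nonadjacent vertices of H has degree sum at most n+s−3. Then for every edge uv of the complement H̄: k−s+2 ≤ d_{H̄}(u), d_{H̄}(v) ≤ n−k−1, d_{H̄}(u)+d_{H̄}(v) ≥ n−s+1, and d_{H̄}(u)·d_{H̄}(v) ≥ (k−s+2)(n−k−1), with equality in the product if and only if {d_{H̄}(u), d_{H̄}(v)} = {k−s+2, n−k−1}. -/

import Mathlib

open Finset

/-- Spectral radius (largest eigenvalue) of the adjacency matrix of `G`. -/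
noncomputable def specRad {V : Type*} [Fintype V] [DecidableEq V] (G : SimpleGraph V) : ℝ :=
  letI : DecidableRel G.Adj := Classical.decRel _
  sSup (spectrum ℝ (G.adjMatrix ℝ))

/-- Degree of a vertex, via `Set.ncard` (no decidability needed). -/
noncomputable def deg {V : Type*} (G : SimpleGraph V) (v : V) : ℕ :=
  (G.neighborSet v).ncard

/-- One step of the `k`-closure: add one edge between nonadjacent vertices
with degree sum at least `k`. -/
def ClosureStep {V : Type*} (k : ℕ) (G H : SimpleGraph V) : Prop :=
  ∃ u v : V, u ≠ v ∧ ¬ G.Adj u v ∧ k ≤ deg G u + deg G v ∧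
    H = G ⊔ SimpleGraph.fromEdgeSet {s(u, v)}

/-- No pair of nonadjacent vertices has degree sum at least `k`. -/
def IsKClosed {V : Type*} (k : ℕ) (H : SimpleGraph V) : Prop :=
  ∀ u v : V, u ≠ v → ¬ H.Adj u v → deg H u + deg H v < k

/-- `H` is a `k`-closure of `G`. -/
def IsKClosure {V : Type*} (k : ℕ) (G H : SimpleGraph V) : Prop :=
  Relation.ReflTransGen (ClosureStep k) G H ∧ IsKClosed k H

/-- `G` is `s`-connected: more than `s` vertices, and deleting fewer than `s`
vertices leaves a connected graph. -/
def SConnected {V : Type*} [Fintype V] (s : ℕ) (G : SimpleGraph V) : Prop :=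
  s < Fintype.card V ∧
    ∀ S : Finset V, S.card < s → (G.induce ((↑S : Set V)ᶜ)).Connected

/-- `G` is `s`-edge-connected: at least two vertices, and deleting fewer than
`s` edges leaves a connected graph. -/
def SEdgeConnected {V : Type*} [Fintype V] (s : ℕ) (G : SimpleGraph V) : Prop :=
  2 ≤ Fintype.card V ∧
    ∀ F : Finset (Sym2 V), ↑F ⊆ G.edgeSet → F.card < s →
      (G.deleteEdges ↑F).Connected

/-- `G` is `β`-deficient: some matching leaves at most `β` vertices unmatched. -/
def BetaDeficient {V : Type*} [Fintype V] (β : ℕ) (G : SimpleGraph V) : Prop :=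
  ∃ M : G.Subgraph, M.IsMatching ∧ Fintype.card V ≤ M.verts.ncard + β

/-- `G` is `s`-path-coverable: the vertices are covered by at most `s`
vertex-disjoint paths. -/
def SPathCoverable {V : Type*} (s : ℕ) (G : SimpleGraph V) : Prop :=
  ∃ m : ℕ, m ≤ s ∧ ∃ (a b : Fin m → V) (p : ∀ i, G.Walk (a i) (b i)),
    (∀ i, (p i).IsPath) ∧
    (∀ i j, i ≠ j → ∀ x, x ∈ (p i).support → x ∉ (p j).support) ∧
    (∀ x : V, ∃ i, x ∈ (p i).support)

/-- `G` is `s`-Hamiltonian: deleting any at most `s` vertices leaves a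
Hamiltonian graph. -/
def SHamiltonian {V : Type*} [Fintype V] [DecidableEq V] (s : ℕ) (G : SimpleGraph V) : Prop :=
  ∀ X : Finset V, X.card ≤ s → (G.induce ((↑X : Set V)ᶜ)).IsHamiltonian

/-- `G` is `s`-edge-Hamiltonian: any collection of vertex-disjoint paths with
at most `s` edges altogether is contained in a Hamiltonian cycle. -/
def SEdgeHamiltonian {V : Type*} [Fintype V] [DecidableEq V] (s : ℕ) (G : SimpleGraph V) : Prop :=
  ∀ (m : ℕ) (a b : Fin m → V) (p : ∀ i, G.Walk (a i) (b i)),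
    (∀ i, (p i).IsPath) →
    (∀ i j, i ≠ j → ∀ x, x ∈ (p i).support → x ∉ (p j).support) →
    (∑ i, (p i).length) ≤ s →
    ∃ (c : V) (w : G.Walk c c), w.IsHamiltonianCycle ∧
      ∀ i, ∀ e ∈ (p i).edges, e ∈ w.edges

/-- `G` is semi-regular bipartite: all edges go between `X` and its complement,
vertices in `X` all have degree `dX`, vertices outside `X` all have degree `dY`. -/
def IsSemiregularBipartite {V : Type*} (G : SimpleGraph V) : Prop :=
  ∃ (X : Set V) (dX dY : ℕ),
    (∀ u v, G.Adj u v → (u ∈ X ↔ v ∉ X)) ∧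
    (∀ u ∈ X, deg G u = dX) ∧
    (∀ u ∉ X, deg G u = dY)

/-- `G ∈ EP_n`: `G = Ḡ₁ ∨ G₂` with `G₁` an `r`-regular graph of order `n-k+r`
and `G₂` a spanning subgraph of `K_{k-r}` (equivalently: outside a set `S` of
`k-r` vertices the induced graph is `(n-k-1)`-regular, and all pairs between
`S` and its complement are joined). -/
def MemEP {V : Type*} [Fintype V] (n k : ℕ) (G : SimpleGraph V) : Prop :=
  ∃ (r : ℕ) (S : Finset V), r ≤ k ∧ S.card = k - r ∧
    (∀ a ∉ S, ∀ b ∈ S, G.Adj a b) ∧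
    (∀ a ∉ S, ((G.neighborSet a) \ (↑S : Set V)).ncard = n - k - 1)

/-- `G ∈ EC_n`: `G = Ḡ₁ ∨ G₂` where `G₁ = (X,Y)` is semi-regular bipartite of
order `n-s+1+r`, with degrees `k-s+2` on `X` and `n-k-1` on `Y`, and `G₂` is an
arbitrary graph on `s-1-r ≥ 0` vertices. -/
def MemEC {V : Type*} [Fintype V] [DecidableEq V] (n k s : ℕ) (G : SimpleGraph V) : Prop :=
  ∃ (r : ℕ) (X Y S : Finset V) (G₁ : SimpleGraph V),
    Disjoint X Y ∧ Disjoint X S ∧ Disjoint Y S ∧ X ∪ Y ∪ S = Finset.univ ∧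
    ((S.card : ℤ) = (s : ℤ) - 1 - r) ∧
    ((X.card : ℤ) + Y.card = (n : ℤ) - s + 1 + r) ∧
    (∀ u v, G₁.Adj u v → (u ∈ X ∧ v ∈ Y) ∨ (u ∈ Y ∧ v ∈ X)) ∧
    (∀ u ∈ X, ((deg G₁ u : ℤ) = (k : ℤ) - s + 2)) ∧
    (∀ v ∈ Y, ((deg G₁ v : ℤ) = (n : ℤ) - k - 1)) ∧
    (∀ a, a ∈ X ∪ Y → ∀ b ∈ S, G.Adj a b) ∧
    (∀ a ∈ X ∪ Y, ∀ b ∈ X ∪ Y, (G.Adj a b ↔ a ≠ b ∧ ¬ G₁.Adj a b))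

/-- `G ∈ ES_n`: `G = Ḡ₁ ∨ G₂` where `G₁ = (X,Y)` is semi-regular bipartite of
order `n-s-1+r`, with degrees `k-s` on `X` and `n-k-1` on `Y`, and `G₂` is an
arbitrary graph on `s+1-r ≥ 0` vertices. -/
def MemES {V : Type*} [Fintype V] [DecidableEq V] (n k s : ℕ) (G : SimpleGraph V) : Prop :=
  ∃ (r : ℕ) (X Y S : Finset V) (G₁ : SimpleGraph V),
    Disjoint X Y ∧ Disjoint X S ∧ Disjoint Y S ∧ X ∪ Y ∪ S = Finset.univ ∧
    ((S.card : ℤ) = (s : ℤ) + 1 - r) ∧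
    ((X.card : ℤ) + Y.card = (n : ℤ) - s - 1 + r) ∧
    (∀ u v, G₁.Adj u v → (u ∈ X ∧ v ∈ Y) ∨ (u ∈ Y ∧ v ∈ X)) ∧
    (∀ u ∈ X, ((deg G₁ u : ℤ) = (k : ℤ) - s)) ∧
    (∀ v ∈ Y, ((deg G₁ v : ℤ) = (n : ℤ) - k - 1)) ∧
    (∀ a, a ∈ X ∪ Y → ∀ b ∈ S, G.Adj a b) ∧
    (∀ a ∈ X ∪ Y, ∀ b ∈ X ∪ Y, (G.Adj a b ↔ a ≠ b ∧ ¬ G₁.Adj a b))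

/-- `G = K_{k+1} + K_{n-k-1}`: the disjoint union of a clique on `k+1` vertices
and a clique on the remaining vertices. -/
def IsCliquePlusClique {V : Type*} [Fintype V] (k : ℕ) (G : SimpleGraph V) : Prop :=
  ∃ S : Finset V, S.card = k + 1 ∧
    (∀ a ∈ S, ∀ b ∈ S, a ≠ b → G.Adj a b) ∧
    (∀ a ∉ S, ∀ b ∉ S, a ≠ b → G.Adj a b) ∧
    (∀ a ∈ S, ∀ b ∉ S, ¬ G.Adj a b)

lemma deg_eq_degree {V : Type*} [Fintype V] [DecidableEq V] (G : SimpleGraph V)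
    [DecidableRel G.Adj] (v : V) : deg G v = G.degree v := by
  rw [deg, ← SimpleGraph.card_neighborSet_eq_degree, Set.ncard_eq_toFinset_card',
    Set.toFinset_card]

lemma deg_compl_int {V : Type*} [Fintype V] (G : SimpleGraph V) (v : V) :
    (deg Gᶜ v : ℤ) = (Fintype.card V : ℤ) - 1 - deg G v := by
  classical
  rw [deg_eq_degree, deg_eq_degree, SimpleGraph.degree_compl]
  have h : G.degree v + 1 ≤ Fintype.card V := by
    have := SimpleGraph.degree_lt_card_verts (G := G) v
    omega
  push_cast [Nat.sub_sub]
  omega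

/-- The key degree estimate on the complement used in the proof of the spectral
condition for `s`-connectivity. -/
theorem stmt_18 {V : Type*} [Fintype V] (n k s : ℕ) (H : SimpleGraph V)
    (hcard : Fintype.card V = n) (hn : 2 * k + 1 ≤ n)
    (hks : (0 : ℤ) ≤ (k : ℤ) - s + 1)
    (hδ : ∀ v : V, k ≤ deg H v)
    (hsum : ∀ u v : V, u ≠ v → ¬ H.Adj u v →
      (deg H u : ℤ) + deg H v ≤ (n : ℤ) + s - 3) :
    ∀ u v : V, Hᶜ.Adj u v →
      ((k : ℤ) - s + 2 ≤ (deg Hᶜ u : ℤ) ∧ (deg Hᶜ u : ℤ) ≤ (n : ℤ) - k - 1 ∧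
       (k : ℤ) - s + 2 ≤ (deg Hᶜ v : ℤ) ∧ (deg Hᶜ v : ℤ) ≤ (n : ℤ) - k - 1 ∧
       (n : ℤ) - s + 1 ≤ (deg Hᶜ u : ℤ) + deg Hᶜ v ∧
       ((k : ℤ) - s + 2) * ((n : ℤ) - k - 1) ≤ (deg Hᶜ u : ℤ) * deg Hᶜ v ∧
       ((deg Hᶜ u : ℤ) * deg Hᶜ v = ((k : ℤ) - s + 2) * ((n : ℤ) - k - 1) ↔
         ((deg Hᶜ u : ℤ) = (k : ℤ) - s + 2 ∧ (deg Hᶜ v : ℤ) = (n : ℤ) - k - 1) ∨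
         ((deg Hᶜ u : ℤ) = (n : ℤ) - k - 1 ∧ (deg Hᶜ v : ℤ) = (k : ℤ) - s + 2))) := by
  intro u v huv
  have hne : u ≠ v := huv.ne
  have hnadj : ¬ H.Adj u v := huv.2
  have hdu := deg_compl_int H u
  have hdv := deg_compl_int H v
  rw [hcard] at hdu hdv
  have hHu := hδ u
  have hHv := hδ v
  have hS := hsum u v hne hnadj
  set a : ℤ := (deg Hᶜ u : ℤ)
  set b : ℤ := (deg Hᶜ v : ℤ)
  set L : ℤ := (k : ℤ) - s + 2
  set U : ℤ := (n : ℤ) - k - 1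
  have hHu' : (k : ℤ) ≤ (deg H u : ℤ) := by exact_mod_cast hHu
  have hHv' : (k : ℤ) ≤ (deg H v : ℤ) := by exact_mod_cast hHv
  have haU : a ≤ U := by simp only [hdu, U]; linarith
  have hbU : b ≤ U := by simp only [hdv, U]; linarith
  have hab : L + U ≤ a + b := by simp only [hdu, hdv, L, U]; linarith
  have haL : L ≤ a := by linarith
  have hbL : L ≤ b := by linarith
  have hLpos : (1 : ℤ) ≤ L := by simp only [L]; linarith
  refine ⟨haL, haU, hbL, hbU, by simp only [L, U] at hab ⊢; linarith, ?_, ?_⟩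
  · nlinarith [mul_nonneg (sub_nonneg.2 haL) (sub_nonneg.2 hbL)]
  · constructor
    · intro heq
      have h1 : (a - L) * (b - L) = 0 := by nlinarith
      rcases mul_eq_zero.1 h1 with h | h
      · have ha' : a = L := by linarith
        left
        refine ⟨ha', ?_⟩
        have : L * b = L * U := by linear_combination heq - b * ha'
        exact mul_left_cancel₀ (by linarith) this
      · have hb' : b = L := by linarith
        right
        refine ⟨?_, hb'⟩
        have : b * a = b * U := by linear_combination heq - U * hb'
        exact mul_left_cancel₀ (by linarith) this
    · rintro (⟨h1, h2⟩ | ⟨h1, h2⟩) <;> rw [h1, h2] <;> ring
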